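/- arXiv:1605.07864 — 2 statements merged into one kernel-verified Lean document; each statement's English description precedes it below -/
import Mathlib

section
/- Let Γ_1, Γ_2, Γ_3 ∈ ℝ∖{0} and z_1, z_2, z_3 ∈ ℝ² be the vertices of an equilateral triangle with side length s > 0 satisfying Γ_1 z_1 + Γ_2 z_2 + Γ_3 z_3 = 0. Then Z_k(t) = e^{-ωJt} z_k, k = 1,2,3, with ω = (Γ_1 + Γ_2 + Γ_3)/(π s²), is a solution of the three-vortex system Γ_k ż_k = J ∇_{z_k} H_0(z) with H_0(z) = -(1/2π) Σ_{j≠k} Γ_j Γ_k log|z_j - z_k|. -/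
open scoped RealInnerProductSpace
open Finset

/- ℝ² is identified with ℂ; the symplectic matrix J = [[0,1],[-1,0]] acts as
multiplication by `-Complex.I`, and `e^{-ωJt}` as multiplication by `exp(ω t I)`. -/

/-- The Kirchhoff–Onsager functional. -/
noncomputable def H0 {N : ℕ} (Γ : Fin N → ℝ) (z : Fin N → ℂ) : ℝ :=
  -(1 / (2 * Real.pi)) *
    ∑ j, ∑ k, if j = k then 0 else Γ j * Γ k * Real.log ‖z j - z k‖

/-- The gradient of a Hamiltonian with respect to the k-th planar variable. -/
noncomputable def gradk {N : ℕ} (Ham : (Fin N → ℂ) → ℝ) (z : Fin N → ℂ) (k : Fin N) : ℂ :=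
  gradient (fun w => Ham (Function.update z k w)) (z k)

/-- `z` solves the Hamiltonian system Γ_k ż_k = J ∇_{z_k} Ham(z). -/
def SolvesHS {N : ℕ} (Γ : Fin N → ℝ) (Ham : (Fin N → ℂ) → ℝ) (z : ℝ → Fin N → ℂ) : Prop :=
  ∀ t k, DifferentiableAt ℝ (fun s => z s k) t ∧
    (Γ k : ℂ) * deriv (fun s => z s k) t = -Complex.I * gradk Ham (z t) k

section Helpers

open InnerProductSpace

lemma hga_add {f g : ℂ → ℝ} {f' g' : ℂ} {x : ℂ} (hf : HasGradientAt f f' x)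
    (hg : HasGradientAt g g' x) : HasGradientAt (fun w => f w + g w) (f' + g') x := by
  rw [hasGradientAt_iff_hasFDerivAt] at *
  refine (hf.add hg).congr_fderiv ?_
  ext v
  simp [toDual_apply_apply, inner_add_left]

lemma hga_const_mul {f : ℂ → ℝ} {f' : ℂ} {x : ℂ} (c : ℝ) (hf : HasGradientAt f f' x) :
    HasGradientAt (fun w => c * f w) (c • f') x := by
  rw [hasGradientAt_iff_hasFDerivAt] at *
  refine (hf.const_mul c).congr_fderiv ?_
  ext v
  simp [toDual_apply_apply, real_inner_smul_left]
  ring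

lemma hga_log_dist {a x : ℂ} (h : x ≠ a) :
    HasGradientAt (fun w => Real.log ‖w - a‖) ((‖x - a‖ ^ 2)⁻¹ • (x - a)) x := by
  have hu : x - a ≠ 0 := sub_ne_zero.mpr h
  have hid : HasFDerivAt (fun w : ℂ => w - a) (ContinuousLinearMap.id ℝ ℂ) x :=
    (hasFDerivAt_id x).sub_const a
  have hinner := hid.inner (𝕜 := ℝ) hid
  have hpos : (0:ℝ) < ⟪x - a, x - a⟫_ℝ := by
    rw [real_inner_self_eq_norm_sq]; exact pow_pos (norm_pos_iff.mpr hu) 2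
  have hlog := (Real.hasDerivAt_log hpos.ne').comp_hasFDerivAt x hinner
  have hhalf := hlog.const_mul (1/2 : ℝ)
  simp only [Function.comp_def] at hhalf
  have hfun : (fun w : ℂ => (1/2 : ℝ) * Real.log ⟪w - a, w - a⟫_ℝ)
      = fun w => Real.log ‖w - a‖ := by
    funext w
    rw [real_inner_self_eq_norm_sq, Real.log_pow]
    push_cast
    ring
  rw [hfun] at hhalf
  rw [hasGradientAt_iff_hasFDerivAt]
  refine hhalf.congr_fderiv ?_
  ext v
  simp only [toDual_apply_apply, ContinuousLinearMap.smul_apply, ContinuousLinearMap.comp_apply,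
    ContinuousLinearMap.prod_apply, ContinuousLinearMap.id_apply, fderivInnerCLM_apply,
    real_inner_smul_left, real_inner_self_eq_norm_sq, smul_eq_mul,
    real_inner_comm v (x - a)]
  ring

lemma gradient_two_logs (C ca cb : ℝ) (A B x : ℂ) (hA : x ≠ A) (hB : x ≠ B) :
    gradient (fun w => C + ca * Real.log ‖w - A‖
        + cb * Real.log ‖w - B‖) x
      = ca • ((‖x - A‖ ^ 2)⁻¹ • (x - A)) + cb • ((‖x - B‖ ^ 2)⁻¹ • (x - B)) := by
  have h1 := hga_const_mul ca (hga_log_dist hA)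
  have h2 := hga_const_mul cb (hga_log_dist hB)
  have hc : HasGradientAt (fun _ : ℂ => C) 0 x := hasGradientAt_const x C
  have h := hga_add (hga_add hc h1) h2
  simpa using h.gradient

lemma update0 (Γ : Fin 3 → ℝ) (y : Fin 3 → ℂ) :
    (fun w => H0 Γ (Function.update y 0 w)) = fun w =>
      (-(1/(2*Real.pi)) * (Γ 1 * Γ 2 * Real.log ‖y 1 - y 2‖
          + Γ 2 * Γ 1 * Real.log ‖y 2 - y 1‖))
      + (-(1/Real.pi) * (Γ 0 * Γ 1)) * Real.log ‖w - y 1‖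
      + (-(1/Real.pi) * (Γ 0 * Γ 2)) * Real.log ‖w - y 2‖ := by
  funext w
  simp only [H0, Fin.sum_univ_three, Function.update]
  norm_num [Fin.ext_iff]
  rw [norm_sub_rev (y 1) w, norm_sub_rev (y 2) w]
  ring

lemma update1 (Γ : Fin 3 → ℝ) (y : Fin 3 → ℂ) :
    (fun w => H0 Γ (Function.update y 1 w)) = fun w =>
      (-(1/(2*Real.pi)) * (Γ 0 * Γ 2 * Real.log ‖y 0 - y 2‖
          + Γ 2 * Γ 0 * Real.log ‖y 2 - y 0‖))
      + (-(1/Real.pi) * (Γ 1 * Γ 0)) * Real.log ‖w - y 0‖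
      + (-(1/Real.pi) * (Γ 1 * Γ 2)) * Real.log ‖w - y 2‖ := by
  funext w
  simp only [H0, Fin.sum_univ_three, Function.update]
  norm_num [Fin.ext_iff]
  rw [norm_sub_rev (y 0) w, norm_sub_rev (y 2) w]
  ring

lemma update2 (Γ : Fin 3 → ℝ) (y : Fin 3 → ℂ) :
    (fun w => H0 Γ (Function.update y 2 w)) = fun w =>
      (-(1/(2*Real.pi)) * (Γ 0 * Γ 1 * Real.log ‖y 0 - y 1‖
          + Γ 1 * Γ 0 * Real.log ‖y 1 - y 0‖))
      + (-(1/Real.pi) * (Γ 2 * Γ 0)) * Real.log ‖w - y 0‖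
      + (-(1/Real.pi) * (Γ 2 * Γ 1)) * Real.log ‖w - y 1‖ := by
  funext w
  simp only [H0, Fin.sum_univ_three, Function.update]
  norm_num [Fin.ext_iff]
  rw [norm_sub_rev (y 0) w, norm_sub_rev (y 1) w]
  ring

end Helpers

/-- Three vortices at the vertices of an equilateral triangle with side s and center of
vorticity 0 form a relative equilibrium with ω = (Γ₁+Γ₂+Γ₃)/(π s²). -/
theorem stmt2 (Γ : Fin 3 → ℝ) (hΓ : ∀ k, Γ k ≠ 0)
    (z : Fin 3 → ℂ) (s : ℝ) (hs : 0 < s)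
    (h01 : ‖z 0 - z 1‖ = s) (h02 : ‖z 0 - z 2‖ = s) (h12 : ‖z 1 - z 2‖ = s)
    (hcenter : (Γ 0) • z 0 + (Γ 1) • z 1 + (Γ 2) • z 2 = 0)
    (ω : ℝ) (hω : ω = (Γ 0 + Γ 1 + Γ 2) / (Real.pi * s ^ 2))
    (Z : ℝ → Fin 3 → ℂ) (hZ : ∀ t k, Z t k = Complex.exp (ω * t * Complex.I) * z k) :
    SolvesHS Γ (H0 Γ) Z := by
  intro t k
  set e := Complex.exp (ω * t * Complex.I) with he
  have hZt : Z t = fun j => e * z j := funext fun j => hZ t j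
  have hzfun : ∀ m, (fun s : ℝ => Z s m) = fun s : ℝ => Complex.exp (ω * s * Complex.I) * z m :=
    fun m => funext fun s => hZ s m
  have hder : ∀ m, HasDerivAt (fun s : ℝ => Complex.exp (ω * s * Complex.I) * z m)
      ((ω * Complex.I) * e * z m) t := by
    intro m
    have h1 : HasDerivAt (fun s : ℝ => ((ω : ℂ) * s * Complex.I)) (ω * Complex.I) t := by
      simpa using ((Complex.ofRealCLM.hasDerivAt (x := t)).const_mul (ω:ℂ)).mul_const Complex.I
    have := h1.cexp.mul_const (z m)
    refine this.congr_deriv ?_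
    ring
  have he1 : ‖e‖ = 1 := by
    rw [he, Complex.norm_exp]; simp
  have hd : ∀ j m, ‖e * z j - e * z m‖ = ‖z j - z m‖ := by
    intro j m; rw [← mul_sub, norm_mul, he1, one_mul]
  have hne : ∀ j m, ‖z j - z m‖ = s → e * z j ≠ e * z m := by
    intro j m hjm hcontra
    have : ‖e * z j - e * z m‖ = 0 := by rw [hcontra]; simp
    rw [hd, hjm] at this
    exact hs.ne' this
  have hcC : (Γ 0 : ℂ) * z 0 + (Γ 1 : ℂ) * z 1 + (Γ 2 : ℂ) * z 2 = 0 := by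
    simpa [Complex.real_smul] using hcenter
  have hπ : Real.pi ≠ 0 := Real.pi_ne_zero
  have hs0 : s ≠ 0 := hs.ne'
  have h10 : ‖z 1 - z 0‖ = s := by rw [norm_sub_rev]; exact h01
  have h20 : ‖z 2 - z 0‖ = s := by rw [norm_sub_rev]; exact h02
  have h21 : ‖z 2 - z 1‖ = s := by rw [norm_sub_rev]; exact h12
  rcases show k = 0 ∨ k = 1 ∨ k = 2 by omega with rfl | rfl | rfl
  · refine ⟨by rw [hzfun 0]; exact (hder 0).differentiableAt, ?_⟩
    rw [hzfun 0, (hder 0).deriv]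
    show _ = -Complex.I * gradk (H0 Γ) (Z t) 0
    unfold gradk
    simp only [hZt]
    rw [update0 Γ (fun j => e * z j)]
    rw [gradient_two_logs _ _ _ _ _ _ (hne 0 1 h01) (hne 0 2 h02), hd 0 1, hd 0 2, h01, h02]
    simp only [Complex.real_smul]
    subst hω
    push_cast
    linear_combination (Complex.I * (Γ 0 : ℂ) * e / ((Real.pi : ℂ) * (s:ℂ)^2)) * hcC
  · refine ⟨by rw [hzfun 1]; exact (hder 1).differentiableAt, ?_⟩
    rw [hzfun 1, (hder 1).deriv]
    show _ = -Complex.I * gradk (H0 Γ) (Z t) 1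
    unfold gradk
    simp only [hZt]
    rw [update1 Γ (fun j => e * z j)]
    rw [gradient_two_logs _ _ _ _ _ _ (hne 1 0 h10) (hne 1 2 h12), hd 1 0, hd 1 2, h10, h12]
    simp only [Complex.real_smul]
    subst hω
    push_cast
    linear_combination (Complex.I * (Γ 1 : ℂ) * e / ((Real.pi : ℂ) * (s:ℂ)^2)) * hcC
  · refine ⟨by rw [hzfun 2]; exact (hder 2).differentiableAt, ?_⟩
    rw [hzfun 2, (hder 2).deriv]
    show _ = -Complex.I * gradk (H0 Γ) (Z t) 2
    unfold gradk
    simp only [hZt]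
    rw [update2 Γ (fun j => e * z j)]
    rw [gradient_two_logs _ _ _ _ _ _ (hne 2 0 h20) (hne 2 1 h21), hd 2 0, hd 2 1, h20, h21]
    simp only [Complex.real_smul]
    subst hω
    push_cast
    linear_combination (Complex.I * (Γ 2 : ℂ) * e / ((Real.pi : ℂ) * (s:ℂ)^2)) * hcC
end

section
/- Let J: U → ℝ be a C¹ functional on an open subset of a Hilbert space H, invariant under a differentiable S¹-action θ*, and let Z ∈ U with orbit derivative Ż = d/dθ|_{θ=0}(θ*Z) ≠ 0. Suppose v ∈ H satisfies: (i) P_X ∇J(Z + v) = 0 where X = Ż^⊥, (ii) θ ↦ θ*v is differentiable at 0 with derivative v̇, and (iii) 1 + ⟨v̇, Ż⟩/‖Ż‖² ≠ 0. Then ∇J(Z + v) = 0, i.e. Z + v is a critical point of J. -/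
open scoped RealInnerProductSpace

/-- Abstract final step: if 𝒥 is invariant under a differentiable S¹-action, Z has orbit
derivative Ż ≠ 0, the gradient of 𝒥 at Z+v is orthogonal to X = Ż^⊥ (i.e. P_X ∇𝒥(Z+v)=0),
θ ↦ θ*v is differentiable at 0 with derivative v̇, and 1 + ⟨v̇,Ż⟩/‖Ż‖² ≠ 0,
then ∇𝒥(Z+v) = 0. -/
theorem stmt14 (H : Type*) [NormedAddCommGroup H] [InnerProductSpace ℝ H] [CompleteSpace H]
    (𝒥 : H → ℝ) (act : ℝ → H → H) (Z v Zdot vdot gradJ : H)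
    (hZdot : Zdot ≠ 0)
    (hact0 : act 0 Z = Z ∧ act 0 v = v)
    (hinv : ∀ θ : ℝ, 𝒥 (act θ Z + act θ v) = 𝒥 (Z + v))
    (hdZ : HasDerivAt (fun θ => act θ Z) Zdot 0)
    (hdv : HasDerivAt (fun θ => act θ v) vdot 0)
    (hgrad : HasGradientAt 𝒥 gradJ (Z + v))
    (hPX : ∀ w : H, ⟪w, Zdot⟫ = 0 → ⟪gradJ, w⟫ = 0)
    (hnd : 1 + ⟪vdot, Zdot⟫ / ‖Zdot‖ ^ 2 ≠ 0) :
    gradJ = 0 := by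
  -- the curve g θ = act θ Z + act θ v
  have hg : HasDerivAt (fun θ => act θ Z + act θ v) (Zdot + vdot) 0 := hdZ.add hdv
  have hg0 : act 0 Z + act 0 v = Z + v := by rw [hact0.1, hact0.2]
  have hF : HasFDerivAt 𝒥 ((InnerProductSpace.toDual ℝ H) gradJ : H →L[ℝ] ℝ) (Z + v) :=
    hgrad.hasFDerivAt
  have hF' : HasFDerivAt 𝒥 ((InnerProductSpace.toDual ℝ H) gradJ : H →L[ℝ] ℝ)
      (act 0 Z + act 0 v) := by rw [hg0]; exact hF
  have hcomp : HasDerivAt (fun θ => 𝒥 (act θ Z + act θ v)) ⟪gradJ, Zdot + vdot⟫ 0 := by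
    have := hF'.comp_hasDerivAt 0 hg
    simp only [InnerProductSpace.toDual_apply_apply] at this
    exact this
  have hconst : HasDerivAt (fun θ => 𝒥 (act θ Z + act θ v)) 0 0 := by
    have : (fun θ : ℝ => 𝒥 (act θ Z + act θ v)) = fun _ => 𝒥 (Z + v) := funext hinv
    rw [this]; exact hasDerivAt_const _ _
  have hzero : ⟪gradJ, Zdot + vdot⟫ = 0 := hcomp.unique hconst
  set c : ℝ := ⟪vdot, Zdot⟫ / ‖Zdot‖ ^ 2 with hc
  have hnZ : ‖Zdot‖ ^ 2 ≠ 0 := pow_ne_zero 2 (norm_ne_zero_iff.mpr hZdot)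
  -- vdot - c • Zdot ⊥ Zdot
  have horth : ⟪vdot - c • Zdot, Zdot⟫ = 0 := by
    rw [inner_sub_left, inner_smul_left]
    simp only [RCLike.star_def, starRingEnd_apply, star_trivial, real_inner_self_eq_norm_sq]
    rw [hc, div_mul_cancel₀ _ hnZ, sub_self]
  have h1 : ⟪gradJ, vdot - c • Zdot⟫ = 0 := hPX _ horth
  have h2 : ⟪gradJ, vdot⟫ = c * ⟪gradJ, Zdot⟫ := by
    have := h1
    rw [inner_sub_right, inner_smul_right, sub_eq_zero] at this
    exact this
  have h3 : (1 + c) * ⟪gradJ, Zdot⟫ = 0 := by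
    rw [inner_add_right, h2] at hzero; ring_nf; ring_nf at hzero; linarith
  have h4 : ⟪gradJ, Zdot⟫ = 0 := by
    rcases mul_eq_zero.mp h3 with h | h
    · exact absurd h hnd
    · exact h
  have h5 : ⟪gradJ, gradJ⟫ = 0 := hPX _ h4
  exact inner_self_eq_zero.mp h5
end
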